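/- Let r > 1 and suppose a : ℤ² → ℂ is such that the double Laurent series g(z₁, z₂) = Σ_{n,m∈ℤ} a_{n,m} z₁ⁿ z₂ᵐ converges absolutely at every point of the closed biannulus Ā_r². Define g₁(z₁,z₂) = Σ_{n≥0, m≥0} a_{n,m} z₁ⁿ z₂ᵐ, g₂(z₁,w₂) = Σ_{n≥0, m≥1} a_{n,−m} z₁ⁿ w₂ᵐ, g₃(w₁,z₂) = Σ_{n≥1, m≥0} a_{−n,m} w₁ⁿ z₂ᵐ, and g₄(w₁,w₂) = Σ_{n≥1, m≥1} a_{−n,−m} w₁ⁿ w₂ᵐ. Then, with ‖g‖ = sup_{Ā_r²}|g| and all left-hand suprema taken over {|·| = r} × {|·| = r}: ‖g₁‖ ≤ (r²/(r²−1))² · ‖g‖; ‖g₂‖ ≤ (r²/(r²−1))·((2r²−1)/(r²−1)) · ‖g‖; ‖g₃‖ ≤ (r²/(r²−1))·((2r²−1)/(r²−1)) · ‖g‖; and ‖g₄‖ ≤ ((2r²−1)/(r²−1))² · ‖g‖. -/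

import Mathlib

open MeasureTheory intervalIntegral Complex in
private lemma fourier_coeff_bound (c : ℤ → ℂ) (ρ : ℝ) (hρ : 0 < ρ) (C : ℝ)
    (hs : Summable fun k : ℤ => ‖c k‖ * ρ ^ k)
    (hb : ∀ z : ℂ, ‖z‖ = ρ → ‖∑' k : ℤ, c k * z ^ k‖ ≤ C) (n : ℤ) :
    ‖c n‖ * ρ ^ n ≤ C := by
  have h2π : (0:ℝ) < 2 * Real.pi := by positivity
  have hC : 0 ≤ C := le_trans (norm_nonneg _) (hb ρ (by simp [abs_of_pos hρ]))
  set F : ℤ → ℝ → ℂ := fun k θ => c k * (ρ:ℂ) ^ k * Complex.exp (((k - n : ℤ) : ℂ) * θ * Complex.I)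
    with hF
  have hnormF : ∀ k θ, ‖F k θ‖ = ‖c k‖ * ρ ^ k := by
    intro k θ
    simp [hF, Complex.norm_exp, norm_mul, norm_zpow, Complex.norm_real, abs_of_pos hρ]
  have hcont : ∀ k, Continuous (F k) := by
    intro k
    apply Continuous.mul continuous_const
    apply Complex.continuous_exp.comp
    fun_prop
  have hIk : ∀ k : ℤ, k ≠ n → ∫ θ in (0:ℝ)..(2*Real.pi), F k θ = 0 := by
    intro k hk
    have hc : ((k - n : ℤ) : ℂ) * Complex.I ≠ 0 := by
      simp [Complex.I_ne_zero, sub_eq_zero, hk]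
    have h1 : Complex.exp ((((k - n : ℤ) : ℂ) * Complex.I) * ((2*Real.pi : ℝ) : ℂ)) = 1 := by
      have := Complex.exp_int_mul_two_pi_mul_I (k - n)
      rw [← this]; congr 1; push_cast; ring
    calc ∫ θ in (0:ℝ)..(2*Real.pi), F k θ
        = c k * (ρ:ℂ) ^ k * ∫ θ in (0:ℝ)..(2*Real.pi),
            Complex.exp ((((k - n : ℤ) : ℂ) * Complex.I) * θ) := by
          rw [← intervalIntegral.integral_const_mul]
          congr 1; ext θ; rw [hF]; ring_nf
      _ = 0 := by
          rw [integral_exp_mul_complex hc, h1]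
          simp
  have hIn : ∫ θ in (0:ℝ)..(2*Real.pi), F n θ = (2*Real.pi) * (c n * (ρ:ℂ) ^ n) := by
    have hFn : F n = fun _ : ℝ => c n * (ρ:ℂ) ^ n := by
      ext θ; simp [hF]
    rw [hFn, intervalIntegral.integral_const, sub_zero, Complex.real_smul]
    push_cast; ring
  have hint : ∀ k, IntegrableOn (F k) (Set.Ioc 0 (2*Real.pi)) volume :=
    fun k => ((hcont k).integrableOn_Ioc)
  have hIoc : (volume (Set.Ioc (0:ℝ) (2*Real.pi))).toReal = 2*Real.pi := by
    simp [Real.volume_Ioc, Real.pi_pos.le]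
  have hsint : Summable fun k : ℤ => ∫ θ in Set.Ioc (0:ℝ) (2*Real.pi), ‖F k θ‖ := by
    have heq : (fun k : ℤ => ∫ θ in Set.Ioc (0:ℝ) (2*Real.pi), ‖F k θ‖)
        = fun k : ℤ => (2*Real.pi) * (‖c k‖ * ρ ^ k) := by
      ext k
      simp only [hnormF]
      rw [MeasureTheory.setIntegral_const, measureReal_def, hIoc, smul_eq_mul]
    rw [heq]
    exact hs.mul_left _
  have hswap := MeasureTheory.integral_tsum_of_summable_integral_norm
    (μ := volume.restrict (Set.Ioc (0:ℝ) (2*Real.pi))) (F := F)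
    (fun k => (hint k)) hsint
  have hLHS : ∑' k : ℤ, ∫ θ in Set.Ioc (0:ℝ) (2*Real.pi), F k θ
      = (2*Real.pi) * (c n * (ρ:ℂ) ^ n) := by
    have heq : ∀ k : ℤ, ∫ θ in Set.Ioc (0:ℝ) (2*Real.pi), F k θ
        = ∫ θ in (0:ℝ)..(2*Real.pi), F k θ := by
      intro k; rw [intervalIntegral.integral_of_le (le_of_lt h2π)]
    rw [tsum_eq_single n]
    · rw [heq, hIn]
    · intro k hk; rw [heq, hIk k hk]
  have hterm : ∀ (k : ℤ) (θ : ℝ),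
      c k * ((ρ:ℂ) * Complex.exp (θ * Complex.I)) ^ k * Complex.exp (-(n:ℂ) * θ * Complex.I)
        = F k θ := by
    intro k θ
    rw [mul_zpow, ← Complex.exp_int_mul, hF]
    simp only []
    rw [mul_assoc (c k), mul_assoc ((ρ:ℂ) ^ k), ← Complex.exp_add, ← mul_assoc]
    congr 1
    push_cast; ring
  have hpt : ∀ θ : ℝ, (∑' k : ℤ, F k θ)
      = (∑' k : ℤ, c k * ((ρ:ℂ) * Complex.exp (θ * Complex.I)) ^ k)
        * Complex.exp (-(n:ℂ) * θ * Complex.I) := by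
    intro θ
    rw [← tsum_mul_right]
    exact tsum_congr fun k => (hterm k θ).symm
  have hbnd : ‖∫ θ in Set.Ioc (0:ℝ) (2*Real.pi), (∑' k : ℤ, F k θ)‖ ≤ C * (2*Real.pi) := by
    rw [← intervalIntegral.integral_of_le (le_of_lt h2π)]
    have hle := intervalIntegral.norm_integral_le_of_norm_le_const
      (C := C) (f := fun θ : ℝ => ∑' k : ℤ, F k θ) (a := (0:ℝ)) (b := 2*Real.pi) ?_
    · calc ‖∫ θ in (0:ℝ)..(2*Real.pi), ∑' k : ℤ, F k θ‖ ≤ C * |2*Real.pi - 0| := hle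
        _ = C * (2*Real.pi) := by rw [sub_zero, abs_of_pos h2π]
    · intro θ _
      show ‖∑' k : ℤ, F k θ‖ ≤ C
      rw [hpt θ]
      have hz : ‖(ρ:ℂ) * Complex.exp (θ * Complex.I)‖ = ρ := by
        simp [norm_mul, Complex.norm_exp, abs_of_pos hρ]
      have he1 : ‖Complex.exp (-(n:ℂ) * θ * Complex.I)‖ = 1 := by
        simp [Complex.norm_exp]
      rw [norm_mul, he1, mul_one]
      exact hb _ hz
  have hfin : ‖(2*(Real.pi:ℝ) : ℂ) * (c n * (ρ:ℂ) ^ n)‖ ≤ C * (2*Real.pi) := by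
    rw [← hLHS, hswap]
    exact hbnd
  have hne : ‖((2*(Real.pi:ℝ) : ℝ) : ℂ) * (c n * (ρ:ℂ) ^ n)‖ = 2*Real.pi * (‖c n‖ * ρ ^ n) := by
    rw [norm_mul, norm_mul, norm_zpow, Complex.norm_real, Complex.norm_real,
      Real.norm_eq_abs, Real.norm_eq_abs, _root_.abs_of_pos hρ, _root_.abs_of_pos h2π]
  rw [show ((2*Real.pi:ℝ):ℂ) = 2 * (Real.pi:ℂ) by push_cast; ring] at hne
  rw [hne] at hfin
  nlinarith


private lemma geom_tsum_bound (q K : ℝ) (hq0 : 0 ≤ q) (hq1 : q < 1) (f : ℕ → ℂ)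
    (hf : ∀ k, ‖f k‖ ≤ K * q ^ k) : ‖∑' k, f k‖ ≤ K / (1 - q) := by
  have hK : 0 ≤ K := by
    have h0 := le_trans (norm_nonneg (f 0)) (hf 0)
    simpa using h0
  have hg : Summable fun k : ℕ => K * q ^ k :=
    (summable_geometric_of_lt_one hq0 hq1).mul_left K
  have hsum : Summable fun k => ‖f k‖ :=
    Summable.of_nonneg_of_le (fun k => norm_nonneg _) hf hg
  calc ‖∑' k, f k‖ ≤ ∑' k, ‖f k‖ := norm_tsum_le_tsum_norm hsum
    _ ≤ ∑' k : ℕ, K * q ^ k := Summable.tsum_le_tsum hf hsum hg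
    _ = K * (1 - q)⁻¹ := by rw [tsum_mul_left, tsum_geometric_of_lt_one hq0 hq1]
    _ = K / (1 - q) := by rw [div_eq_mul_inv]

private lemma int_split_tsum (f : ℤ → ℂ) (hf : Summable f) :
    ∑' n : ℤ, f n = (∑' n : ℕ, f n) + ∑' k : ℕ, f (-(k + 1)) := by
  refine tsum_of_nat_of_neg_add_one ?_ ?_
  · exact hf.comp_injective (fun x y h => by exact_mod_cast h)
  · exact hf.comp_injective (i := fun k : ℕ => (-(k + 1) : ℤ))
      (fun x y h => by simpa using h)

private lemma term_bound (r M A : ℝ) (hrne : r ≠ 0) (s : ℕ)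
    (h : A * r ^ (s : ℤ) ≤ M) : A * r ^ (-(s : ℤ)) ≤ M * ((r ^ 2)⁻¹) ^ s := by
  have h1 : A * r ^ (-(s : ℤ)) = (A * r ^ (s : ℤ)) * ((r ^ 2)⁻¹) ^ s := by
    have h2 : ((r ^ 2)⁻¹ : ℝ) ^ s = r ^ (-(2 * s : ℕ) : ℤ) := by
      rw [inv_pow, ← pow_mul, ← zpow_natCast r (2 * s), ← zpow_neg]
    rw [h2, mul_assoc, ← zpow_add₀ hrne]
    congr 2
    push_cast; ring
  rw [h1]
  have hp : (0:ℝ) ≤ ((r ^ 2)⁻¹ : ℝ) ^ s := by positivity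
  exact mul_le_mul_of_nonneg_right h hp

noncomputable def bfun (a : ℤ → ℤ → ℂ) (n : ℤ) (z₂ : ℂ) : ℂ := ∑' m : ℤ, a n m * z₂ ^ m
noncomputable def dfun (a : ℤ → ℤ → ℂ) (m : ℤ) (z₁ : ℂ) : ℂ := ∑' n : ℕ, a n m * z₁ ^ (n : ℤ)
noncomputable def efun (a : ℤ → ℤ → ℂ) (m : ℤ) (z₁ : ℂ) : ℂ :=
  ∑' k : ℕ, a (-((k : ℤ) + 1)) m * z₁ ^ (-((k : ℤ) + 1))

set_option maxHeartbeats 2000000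

/-- Let `r > 1` and let `g(z₁,z₂) = Σ_{n,m∈ℤ} a_{n,m} z₁ⁿ z₂ᵐ` be an
absolutely convergent double Laurent series on the closed biannulus `Ā_r²`.  With
`g₁, g₂, g₃, g₄` the four "corner" parts of the series and `‖g‖ = sup_{Ā_r²}|g|`, for all
points of the torus `{|ξ₁| = |ξ₂| = r}`:
`|g₁| ≤ (r²/(r²−1))²·‖g‖`, `|g₂| ≤ (r²/(r²−1))((2r²−1)/(r²−1))·‖g‖`,
`|g₃| ≤ (r²/(r²−1))((2r²−1)/(r²−1))·‖g‖`, and `|g₄| ≤ ((2r²−1)/(r²−1))²·‖g‖`. -/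
theorem biannulus_laurent_split_bounds
    (r : ℝ) (hr : 1 < r) (a : ℤ → ℤ → ℂ)
    (hsum : ∀ z₁ z₂ : ℂ, 1 / r ≤ ‖z₁‖ → ‖z₁‖ ≤ r → 1 / r ≤ ‖z₂‖ → ‖z₂‖ ≤ r →
      Summable fun nm : ℤ × ℤ => ‖a nm.1 nm.2 * z₁ ^ nm.1 * z₂ ^ nm.2‖) :
    ∀ ξ₁ ξ₂ : ℂ, ‖ξ₁‖ = r → ‖ξ₂‖ = r →
      ‖∑' nm : ℕ × ℕ, a (nm.1 : ℤ) (nm.2 : ℤ) * ξ₁ ^ nm.1 * ξ₂ ^ nm.2‖ ≤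
        (r ^ 2 / (r ^ 2 - 1)) ^ 2 * sSup ((fun zw : ℂ × ℂ => ‖∑' nm : ℤ × ℤ, a nm.1 nm.2 * zw.1 ^ nm.1 * zw.2 ^ nm.2‖) '' ({z : ℂ | 1 / r ≤ ‖z‖ ∧ ‖z‖ ≤ r} ×ˢ {z : ℂ | 1 / r ≤ ‖z‖ ∧ ‖z‖ ≤ r})) ∧
      ‖∑' nm : ℕ × ℕ, a (nm.1 : ℤ) (-((nm.2 : ℤ) + 1)) * ξ₁ ^ nm.1 * ξ₂ ^ (nm.2 + 1)‖ ≤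
        (r ^ 2 / (r ^ 2 - 1)) * ((2 * r ^ 2 - 1) / (r ^ 2 - 1)) * sSup ((fun zw : ℂ × ℂ => ‖∑' nm : ℤ × ℤ, a nm.1 nm.2 * zw.1 ^ nm.1 * zw.2 ^ nm.2‖) '' ({z : ℂ | 1 / r ≤ ‖z‖ ∧ ‖z‖ ≤ r} ×ˢ {z : ℂ | 1 / r ≤ ‖z‖ ∧ ‖z‖ ≤ r})) ∧
      ‖∑' nm : ℕ × ℕ, a (-((nm.1 : ℤ) + 1)) (nm.2 : ℤ) * ξ₁ ^ (nm.1 + 1) * ξ₂ ^ nm.2‖ ≤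
        (r ^ 2 / (r ^ 2 - 1)) * ((2 * r ^ 2 - 1) / (r ^ 2 - 1)) * sSup ((fun zw : ℂ × ℂ => ‖∑' nm : ℤ × ℤ, a nm.1 nm.2 * zw.1 ^ nm.1 * zw.2 ^ nm.2‖) '' ({z : ℂ | 1 / r ≤ ‖z‖ ∧ ‖z‖ ≤ r} ×ˢ {z : ℂ | 1 / r ≤ ‖z‖ ∧ ‖z‖ ≤ r})) ∧
      ‖∑' nm : ℕ × ℕ, a (-((nm.1 : ℤ) + 1)) (-((nm.2 : ℤ) + 1)) * ξ₁ ^ (nm.1 + 1) * ξ₂ ^ (nm.2 + 1)‖ ≤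
        ((2 * r ^ 2 - 1) / (r ^ 2 - 1)) ^ 2 * sSup ((fun zw : ℂ × ℂ => ‖∑' nm : ℤ × ℤ, a nm.1 nm.2 * zw.1 ^ nm.1 * zw.2 ^ nm.2‖) '' ({z : ℂ | 1 / r ≤ ‖z‖ ∧ ‖z‖ ≤ r} ×ˢ {z : ℂ | 1 / r ≤ ‖z‖ ∧ ‖z‖ ≤ r})) := by
  have hr0 : (0:ℝ) < r := lt_trans one_pos hr
  have hrne : r ≠ 0 := ne_of_gt hr0
  have hr1 : (0:ℝ) < 1 / r := by positivity
  have hrr : 1 / r ≤ r := by rw [div_le_iff₀ hr0]; nlinarith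
  have hr2 : (0:ℝ) < r ^ 2 - 1 := by nlinarith
  have hq0 : (0:ℝ) ≤ (r ^ 2)⁻¹ := by positivity
  have hq1 : (r ^ 2)⁻¹ < 1 := by
    rw [inv_lt_one_iff₀]; right; nlinarith
  -- norm computations for corner points
  have hcr : ‖((r : ℝ) : ℂ)‖ = r := by
    simp [Complex.norm_real, _root_.abs_of_pos hr0]
  have hcr' : ‖((1 / r : ℝ) : ℂ)‖ = 1 / r := by
    simp [Complex.norm_real, _root_.abs_of_pos hr1, hr0.le]
  have hone : ‖(1 : ℂ)‖ = 1 := norm_one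
  -- summability of norms
  have hNsum : ∀ z₁ z₂ : ℂ, 1 / r ≤ ‖z₁‖ → ‖z₁‖ ≤ r → 1 / r ≤ ‖z₂‖ → ‖z₂‖ ≤ r →
      Summable fun nm : ℤ × ℤ => ‖a nm.1 nm.2‖ * ‖z₁‖ ^ nm.1 * ‖z₂‖ ^ nm.2 := by
    intro z₁ z₂ h1 h2 h3 h4
    have := hsum z₁ z₂ h1 h2 h3 h4
    simpa [norm_mul, norm_zpow] using this
  -- zpow bound on the annulus
  have hzb : ∀ z : ℂ, 1 / r ≤ ‖z‖ → ‖z‖ ≤ r → ∀ n : ℤ, ‖z‖ ^ n ≤ r ^ |n| := by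
    intro z h1 h2 n
    have hz0 : 0 < ‖z‖ := lt_of_lt_of_le hr1 h1
    rcases le_or_gt 0 n with hn | hn
    · rw [abs_of_nonneg hn]
      lift n to ℕ using hn
      rw [zpow_natCast, zpow_natCast]
      exact pow_le_pow_left₀ (norm_nonneg z) h2 n
    · rw [abs_of_neg hn]
      have hinv : ‖z‖⁻¹ ≤ r := by
        rw [← one_div, div_le_iff₀ hz0]
        have := (div_le_iff₀ hr0).mp h1
        nlinarith
      have hk : 0 ≤ -n := by omega
      lift -n to ℕ using hk with k hk'
      have hnn : n = -(k : ℤ) := by omega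
      rw [hnn, zpow_neg, ← inv_zpow, zpow_natCast, zpow_natCast]
      exact pow_le_pow_left₀ (by positivity) hinv k
  -- the supremum
  set M : ℝ := sSup ((fun zw : ℂ × ℂ => ‖∑' nm : ℤ × ℤ, a nm.1 nm.2 * zw.1 ^ nm.1 * zw.2 ^ nm.2‖) '' ({z : ℂ | 1 / r ≤ ‖z‖ ∧ ‖z‖ ≤ r} ×ˢ {z : ℂ | 1 / r ≤ ‖z‖ ∧ ‖z‖ ≤ r})) with hMdef
  clear_value M
  -- dominating function
  have hUsum : Summable (fun nm : ℤ × ℤ => ‖a nm.1 nm.2‖ * r ^ |nm.1| * r ^ |nm.2|) := by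
    have s1 := hNsum ((r:ℝ):ℂ) ((r:ℝ):ℂ) (by rw [hcr]; exact hrr) (by rw [hcr])
      (by rw [hcr]; exact hrr) (by rw [hcr])
    have s2 := hNsum ((r:ℝ):ℂ) ((1/r:ℝ):ℂ) (by rw [hcr]; exact hrr) (by rw [hcr])
      (by rw [hcr']) (by rw [hcr']; exact hrr)
    have s3 := hNsum ((1/r:ℝ):ℂ) ((r:ℝ):ℂ) (by rw [hcr']) (by rw [hcr']; exact hrr)
      (by rw [hcr]; exact hrr) (by rw [hcr])
    have s4 := hNsum ((1/r:ℝ):ℂ) ((1/r:ℝ):ℂ) (by rw [hcr']) (by rw [hcr']; exact hrr)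
      (by rw [hcr']) (by rw [hcr']; exact hrr)
    rw [hcr] at s1 s2 s3; rw [hcr'] at s2 s3 s4
    have habs : ∀ n : ℤ, n < 0 → (r:ℝ) ^ |n| = (1/r) ^ n := by
      intro n hn
      rw [abs_of_neg hn, one_div, inv_zpow, ← zpow_neg]
    apply Summable.of_nonneg_of_le (fun nm => by positivity) _ (((s1.add s2).add s3).add s4)
    rintro ⟨n, m⟩
    have e1 : ∀ (x y : ℤ × ℤ → ℝ), True := fun _ _ => trivial
    rcases le_or_gt 0 n with hn | hn <;> rcases le_or_gt 0 m with hm | hm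
    · have : ‖a n m‖ * r ^ |n| * r ^ |m| = ‖a n m‖ * r ^ n * r ^ m := by
        rw [abs_of_nonneg hn, abs_of_nonneg hm]
      rw [this]
      have h2 : (0:ℝ) ≤ ‖a n m‖ * r ^ n * (1/r) ^ m := by positivity
      have h3 : (0:ℝ) ≤ ‖a n m‖ * (1/r) ^ n * r ^ m := by positivity
      have h4 : (0:ℝ) ≤ ‖a n m‖ * (1/r) ^ n * (1/r) ^ m := by positivity
      simp only []
      linarith
    · have : ‖a n m‖ * r ^ |n| * r ^ |m| = ‖a n m‖ * r ^ n * (1/r) ^ m := by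
        rw [abs_of_nonneg hn, habs m hm]
      rw [this]
      have h1 : (0:ℝ) ≤ ‖a n m‖ * r ^ n * r ^ m := by positivity
      have h3 : (0:ℝ) ≤ ‖a n m‖ * (1/r) ^ n * r ^ m := by positivity
      have h4 : (0:ℝ) ≤ ‖a n m‖ * (1/r) ^ n * (1/r) ^ m := by positivity
      simp only []
      linarith
    · have : ‖a n m‖ * r ^ |n| * r ^ |m| = ‖a n m‖ * (1/r) ^ n * r ^ m := by
        rw [habs n hn, abs_of_nonneg hm]
      rw [this]
      have h1 : (0:ℝ) ≤ ‖a n m‖ * r ^ n * r ^ m := by positivity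
      have h2 : (0:ℝ) ≤ ‖a n m‖ * r ^ n * (1/r) ^ m := by positivity
      have h4 : (0:ℝ) ≤ ‖a n m‖ * (1/r) ^ n * (1/r) ^ m := by positivity
      simp only []
      linarith
    · have : ‖a n m‖ * r ^ |n| * r ^ |m| = ‖a n m‖ * (1/r) ^ n * (1/r) ^ m := by
        rw [habs n hn, habs m hm]
      rw [this]
      have h1 : (0:ℝ) ≤ ‖a n m‖ * r ^ n * r ^ m := by positivity
      have h2 : (0:ℝ) ≤ ‖a n m‖ * r ^ n * (1/r) ^ m := by positivity
      have h3 : (0:ℝ) ≤ ‖a n m‖ * (1/r) ^ n * r ^ m := by positivity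
      simp only []
      linarith
  -- every value of G is bounded by the tsum of U
  have hGU : ∀ z₁ z₂ : ℂ, 1 / r ≤ ‖z₁‖ → ‖z₁‖ ≤ r → 1 / r ≤ ‖z₂‖ → ‖z₂‖ ≤ r →
      ‖∑' nm : ℤ × ℤ, a nm.1 nm.2 * z₁ ^ nm.1 * z₂ ^ nm.2‖ ≤
        ∑' nm : ℤ × ℤ, ‖a nm.1 nm.2‖ * r ^ |nm.1| * r ^ |nm.2| := by
    intro z₁ z₂ h1 h2 h3 h4
    calc ‖∑' nm : ℤ × ℤ, a nm.1 nm.2 * z₁ ^ nm.1 * z₂ ^ nm.2‖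
        ≤ ∑' nm : ℤ × ℤ, ‖a nm.1 nm.2 * z₁ ^ nm.1 * z₂ ^ nm.2‖ :=
          norm_tsum_le_tsum_norm (hsum z₁ z₂ h1 h2 h3 h4)
      _ ≤ ∑' nm : ℤ × ℤ, ‖a nm.1 nm.2‖ * r ^ |nm.1| * r ^ |nm.2| := by
          apply Summable.tsum_le_tsum _ (hsum z₁ z₂ h1 h2 h3 h4) hUsum
          rintro ⟨n, m⟩
          rw [norm_mul, norm_mul, norm_zpow, norm_zpow]
          have t1 := hzb z₁ h1 h2 n
          have t2 := hzb z₂ h3 h4 m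
          have : (0:ℝ) ≤ ‖a n m‖ := norm_nonneg _
          have p1 : (0:ℝ) ≤ ‖z₁‖ ^ n := by positivity
          have p2 : (0:ℝ) ≤ ‖z₂‖ ^ m := by positivity
          have p3 : (0:ℝ) ≤ r ^ |n| := by positivity
          exact mul_le_mul (mul_le_mul_of_nonneg_left t1 this) t2 p2 (by positivity)
  have hbdd : BddAbove ((fun zw : ℂ × ℂ => ‖∑' nm : ℤ × ℤ, a nm.1 nm.2 * zw.1 ^ nm.1 * zw.2 ^ nm.2‖) '' ({z : ℂ | 1 / r ≤ ‖z‖ ∧ ‖z‖ ≤ r} ×ˢ {z : ℂ | 1 / r ≤ ‖z‖ ∧ ‖z‖ ≤ r})) := by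
    refine ⟨∑' nm : ℤ × ℤ, ‖a nm.1 nm.2‖ * r ^ |nm.1| * r ^ |nm.2|, ?_⟩
    rintro x ⟨⟨z₁, z₂⟩, hz, rfl⟩
    exact hGU z₁ z₂ hz.1.1 hz.1.2 hz.2.1 hz.2.2
  have hM : ∀ z₁ z₂ : ℂ, 1 / r ≤ ‖z₁‖ → ‖z₁‖ ≤ r → 1 / r ≤ ‖z₂‖ → ‖z₂‖ ≤ r →
      ‖∑' nm : ℤ × ℤ, a nm.1 nm.2 * z₁ ^ nm.1 * z₂ ^ nm.2‖ ≤ M := by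
    intro z₁ z₂ h1 h2 h3 h4
    rw [hMdef]
    exact le_csSup hbdd ⟨(z₁, z₂), ⟨⟨h1, h2⟩, ⟨h3, h4⟩⟩, rfl⟩
  have hM0 : 0 ≤ M :=
    le_trans (norm_nonneg _) (hM ((r:ℝ):ℂ) ((r:ℝ):ℂ) (by rw [hcr]; exact hrr) (by rw [hcr])
      (by rw [hcr]; exact hrr) (by rw [hcr]))
  have hrm1 : (1:ℝ)/r ≤ 1 := by rw [div_le_one hr0]; exact hr.le
  have hzpow_inv : ∀ n : ℤ, ((1/r : ℝ)) ^ n = r ^ (-n) := by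
    intro n; rw [one_div, inv_zpow, ← zpow_neg]
  -- geometric helpers
  have hq : (1 : ℝ) - (r ^ 2)⁻¹ = (r ^ 2 - 1) / r ^ 2 := by field_simp
  have hgeom0 : ∀ (K : ℝ) (f : ℕ → ℂ), (∀ k, ‖f k‖ ≤ K * ((r ^ 2)⁻¹) ^ k) →
      ‖∑' k, f k‖ ≤ K * (r ^ 2 / (r ^ 2 - 1)) := by
    intro K f hf
    have h := geom_tsum_bound _ K hq0 hq1 f hf
    calc ‖∑' k, f k‖ ≤ K / (1 - (r ^ 2)⁻¹) := h
      _ = K * (r ^ 2 / (r ^ 2 - 1)) := by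
          rw [hq, div_div_eq_mul_div, mul_div_assoc]
  have hgeom1 : ∀ (K : ℝ), 0 ≤ K → ∀ (f : ℕ → ℂ), (∀ k, ‖f k‖ ≤ K * ((r ^ 2)⁻¹) ^ (k + 1)) →
      ‖∑' k, f k‖ ≤ K * (1 / (r ^ 2 - 1)) := by
    intro K hK f hf
    have hf' : ∀ k, ‖f k‖ ≤ (K * (r ^ 2)⁻¹) * ((r ^ 2)⁻¹) ^ k := by
      intro k
      calc ‖f k‖ ≤ K * ((r ^ 2)⁻¹) ^ (k + 1) := hf k
        _ = (K * (r ^ 2)⁻¹) * ((r ^ 2)⁻¹) ^ k := by rw [pow_succ']; ring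
    have h := geom_tsum_bound _ (K * (r ^ 2)⁻¹) hq0 hq1 f hf'
    calc ‖∑' k, f k‖ ≤ (K * (r ^ 2)⁻¹) / (1 - (r ^ 2)⁻¹) := h
      _ = K * (1 / (r ^ 2 - 1)) := by
          rw [hq]
          rw [div_div_eq_mul_div]
          field_simp
  -- row sums
  have hrowsum : ∀ z₂ : ℂ, 1 / r ≤ ‖z₂‖ → ‖z₂‖ ≤ r → ∀ n : ℤ,
      Summable fun m : ℤ => ‖a n m * z₂ ^ m‖ := by
    intro z₂ h3 h4 n
    have h := (hsum 1 z₂ (by rw [hone]; exact hrm1) (by rw [hone]; exact hr.le) h3 h4).prod_factor n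
    simpa using h
  have hble : ∀ z₂ : ℂ, 1 / r ≤ ‖z₂‖ → ‖z₂‖ ≤ r → ∀ n : ℤ,
      ‖bfun a n z₂‖ ≤ ∑' m : ℤ, ‖a n m * z₂ ^ m‖ := by
    intro z₂ h3 h4 n
    exact norm_tsum_le_tsum_norm (hrowsum z₂ h3 h4 n)
  have hmargB : ∀ z₁ z₂ : ℂ, 1 / r ≤ ‖z₁‖ → ‖z₁‖ ≤ r → 1 / r ≤ ‖z₂‖ → ‖z₂‖ ≤ r →
      Summable fun n : ℤ => (∑' m : ℤ, ‖a n m * z₂ ^ m‖) * ‖z₁‖ ^ n := by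
    intro z₁ z₂ h1 h2 h3 h4
    have h := ((summable_prod_of_nonneg (fun p => by positivity)).mp
      (hNsum z₁ z₂ h1 h2 h3 h4)).2
    refine h.congr fun n => ?_
    rw [← tsum_mul_right]
    refine tsum_congr fun m => ?_
    rw [norm_mul, norm_zpow]
    ring
  have hbsum : ∀ z₁ z₂ : ℂ, 1 / r ≤ ‖z₁‖ → ‖z₁‖ ≤ r → 1 / r ≤ ‖z₂‖ → ‖z₂‖ ≤ r →
      Summable fun n : ℤ => ‖bfun a n z₂ * z₁ ^ n‖ := by
    intro z₁ z₂ h1 h2 h3 h4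
    apply Summable.of_nonneg_of_le (fun n => norm_nonneg _) _ (hmargB z₁ z₂ h1 h2 h3 h4)
    intro n
    rw [norm_mul, norm_zpow]
    exact mul_le_mul_of_nonneg_right (hble z₂ h3 h4 n) (by positivity)
  have hGb : ∀ z₁ z₂ : ℂ, 1 / r ≤ ‖z₁‖ → ‖z₁‖ ≤ r → 1 / r ≤ ‖z₂‖ → ‖z₂‖ ≤ r →
      (∑' nm : ℤ × ℤ, a nm.1 nm.2 * z₁ ^ nm.1 * z₂ ^ nm.2) = ∑' n : ℤ, bfun a n z₂ * z₁ ^ n := by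
    intro z₁ z₂ h1 h2 h3 h4
    rw [Summable.tsum_prod ((hsum z₁ z₂ h1 h2 h3 h4).of_norm)]
    refine tsum_congr fun n => ?_
    unfold bfun
    rw [← tsum_mul_right]
    exact tsum_congr fun m => by ring
  -- Fourier bound for rows
  have hbF : ∀ z₂ : ℂ, 1 / r ≤ ‖z₂‖ → ‖z₂‖ ≤ r → ∀ ρ : ℝ, 1 / r ≤ ρ → ρ ≤ r → ∀ n : ℤ,
      ‖bfun a n z₂‖ * ρ ^ n ≤ M := by
    intro z₂ h3 h4 ρ hρ1 hρ2 n
    have hρ0 : 0 < ρ := lt_of_lt_of_le hr1 hρ1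
    have hρc : ‖((ρ : ℝ) : ℂ)‖ = ρ := by simp [Complex.norm_real, _root_.abs_of_pos hρ0]
    refine fourier_coeff_bound (fun k => bfun a k z₂) ρ hρ0 M ?_ ?_ n
    · have h := hmargB ((ρ : ℝ) : ℂ) z₂ (by rw [hρc]; exact hρ1) (by rw [hρc]; exact hρ2) h3 h4
      rw [hρc] at h
      apply Summable.of_nonneg_of_le (fun k => by positivity) _ h
      intro k
      exact mul_le_mul_of_nonneg_right (hble z₂ h3 h4 k) (by positivity)
    · intro z hz
      have hz1 : 1 / r ≤ ‖z‖ := by rw [hz]; exact hρ1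
      have hz2 : ‖z‖ ≤ r := by rw [hz]; exact hρ2
      rw [← hGb z z₂ hz1 hz2 h3 h4]
      exact hM z z₂ hz1 hz2 h3 h4
  -- constant identities
  have hMM1 : M + M * (1 / (r ^ 2 - 1)) = M * (r ^ 2 / (r ^ 2 - 1)) := by
    field_simp; ring
  have hMM2 : M + M * (r ^ 2 / (r ^ 2 - 1)) = M * ((2 * r ^ 2 - 1) / (r ^ 2 - 1)) := by
    field_simp; ring
  -- bound for the nonnegative z₁-half at ‖z₁‖ = r
  have hHr : ∀ z₁ z₂ : ℂ, ‖z₁‖ = r → 1 / r ≤ ‖z₂‖ → ‖z₂‖ ≤ r →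
      ‖∑' n : ℕ, bfun a (n : ℤ) z₂ * z₁ ^ (n : ℤ)‖ ≤ M * (r ^ 2 / (r ^ 2 - 1)) := by
    intro z₁ z₂ hz1 h3 h4
    have h1 : 1 / r ≤ ‖z₁‖ := by rw [hz1]; exact hrr
    have h2 : ‖z₁‖ ≤ r := le_of_eq hz1
    have hsZ : Summable fun n : ℤ => bfun a n z₂ * z₁ ^ n := (hbsum z₁ z₂ h1 h2 h3 h4).of_norm
    have hspl := int_split_tsum _ hsZ
    have heq : (∑' n : ℕ, bfun a (n : ℤ) z₂ * z₁ ^ (n : ℤ))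
        = (∑' n : ℤ, bfun a n z₂ * z₁ ^ n)
          - ∑' k : ℕ, bfun a (-((k : ℤ) + 1)) z₂ * z₁ ^ (-((k : ℤ) + 1)) := by
      rw [hspl]; ring
    have htail : ‖∑' k : ℕ, bfun a (-((k : ℤ) + 1)) z₂ * z₁ ^ (-((k : ℤ) + 1))‖
        ≤ M * (1 / (r ^ 2 - 1)) := by
      apply hgeom1 M hM0
      intro k
      rw [norm_mul, norm_zpow, hz1]
      have hcast : (-((k : ℤ) + 1)) = -((k + 1 : ℕ) : ℤ) := by push_cast; ring
      rw [hcast]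
      apply term_bound r M _ hrne (k + 1)
      have hF := hbF z₂ h3 h4 (1 / r) le_rfl hrr (-((k + 1 : ℕ) : ℤ))
      rwa [hzpow_inv, neg_neg] at hF
    have hZbd : ‖∑' n : ℤ, bfun a n z₂ * z₁ ^ n‖ ≤ M := by
      rw [← hGb z₁ z₂ h1 h2 h3 h4]; exact hM z₁ z₂ h1 h2 h3 h4
    calc ‖∑' n : ℕ, bfun a (n : ℤ) z₂ * z₁ ^ (n : ℤ)‖
        ≤ ‖∑' n : ℤ, bfun a n z₂ * z₁ ^ n‖
          + ‖∑' k : ℕ, bfun a (-((k : ℤ) + 1)) z₂ * z₁ ^ (-((k : ℤ) + 1))‖ := by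
          rw [heq]; exact norm_sub_le _ _
      _ ≤ M + M * (1 / (r ^ 2 - 1)) := add_le_add hZbd htail
      _ = M * (r ^ 2 / (r ^ 2 - 1)) := hMM1
  -- bound for the nonnegative z₁-half at ‖z₁‖ = 1/r
  have hHinv : ∀ z₁ z₂ : ℂ, ‖z₁‖ = 1 / r → 1 / r ≤ ‖z₂‖ → ‖z₂‖ ≤ r →
      ‖∑' n : ℕ, bfun a (n : ℤ) z₂ * z₁ ^ (n : ℤ)‖ ≤ M * (r ^ 2 / (r ^ 2 - 1)) := by
    intro z₁ z₂ hz1 h3 h4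
    apply hgeom0 M
    intro k
    rw [norm_mul, norm_zpow, hz1, hzpow_inv]
    apply term_bound r M _ hrne k
    exact hbF z₂ h3 h4 r hrr le_rfl (k : ℤ)
  -- bound for the negative z₁-half at ‖z₁‖ = 1/r
  have hT : ∀ z₁ z₂ : ℂ, ‖z₁‖ = 1 / r → 1 / r ≤ ‖z₂‖ → ‖z₂‖ ≤ r →
      ‖∑' k : ℕ, bfun a (-((k : ℤ) + 1)) z₂ * z₁ ^ (-((k : ℤ) + 1))‖
        ≤ M * ((2 * r ^ 2 - 1) / (r ^ 2 - 1)) := by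
    intro z₁ z₂ hz1 h3 h4
    have h1 : 1 / r ≤ ‖z₁‖ := le_of_eq hz1.symm
    have h2 : ‖z₁‖ ≤ r := by rw [hz1]; exact hrr
    have hsZ : Summable fun n : ℤ => bfun a n z₂ * z₁ ^ n := (hbsum z₁ z₂ h1 h2 h3 h4).of_norm
    have hspl := int_split_tsum _ hsZ
    have heq : (∑' k : ℕ, bfun a (-((k : ℤ) + 1)) z₂ * z₁ ^ (-((k : ℤ) + 1)))
        = (∑' n : ℤ, bfun a n z₂ * z₁ ^ n) - ∑' n : ℕ, bfun a (n : ℤ) z₂ * z₁ ^ (n : ℤ) := by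
      rw [hspl]; ring
    have hZbd : ‖∑' n : ℤ, bfun a n z₂ * z₁ ^ n‖ ≤ M := by
      rw [← hGb z₁ z₂ h1 h2 h3 h4]; exact hM z₁ z₂ h1 h2 h3 h4
    calc ‖∑' k : ℕ, bfun a (-((k : ℤ) + 1)) z₂ * z₁ ^ (-((k : ℤ) + 1))‖
        ≤ ‖∑' n : ℤ, bfun a n z₂ * z₁ ^ n‖
          + ‖∑' n : ℕ, bfun a (n : ℤ) z₂ * z₁ ^ (n : ℤ)‖ := by
          rw [heq]; exact norm_sub_le _ _
      _ ≤ M + M * (r ^ 2 / (r ^ 2 - 1)) := add_le_add hZbd (hHinv z₁ z₂ hz1 h3 h4)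
      _ = M * ((2 * r ^ 2 - 1) / (r ^ 2 - 1)) := hMM2
  -- summability over ℕ × ℤ
  have hinj1 : Function.Injective (fun nm : ℕ × ℤ => (((nm.1 : ℤ), nm.2) : ℤ × ℤ)) := by
    intro x y h
    have h1 : ((x.1 : ℤ), x.2) = ((y.1 : ℤ), y.2) := h
    rw [Prod.mk.injEq] at h1
    exact Prod.ext (by exact_mod_cast h1.1) h1.2
  have hinj2 : Function.Injective (fun nm : ℕ × ℤ => ((-((nm.1 : ℤ) + 1), nm.2) : ℤ × ℤ)) := by
    intro x y h
    have h1 : ((-((x.1 : ℤ) + 1), x.2) : ℤ × ℤ) = (-((y.1 : ℤ) + 1), y.2) := h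
    rw [Prod.mk.injEq] at h1
    have h2 := h1.1
    exact Prod.ext (by omega) h1.2
  have hNZ : ∀ z₁ z₂ : ℂ, 1 / r ≤ ‖z₁‖ → ‖z₁‖ ≤ r → 1 / r ≤ ‖z₂‖ → ‖z₂‖ ≤ r →
      Summable fun nm : ℕ × ℤ => ‖a (nm.1 : ℤ) nm.2 * z₁ ^ (nm.1 : ℤ) * z₂ ^ nm.2‖ := by
    intro z₁ z₂ h1 h2 h3 h4
    exact Summable.congr ((hsum z₁ z₂ h1 h2 h3 h4).comp_injective hinj1) fun nm => rfl
  have hNZ' : ∀ z₁ z₂ : ℂ, 1 / r ≤ ‖z₁‖ → ‖z₁‖ ≤ r → 1 / r ≤ ‖z₂‖ → ‖z₂‖ ≤ r →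
      Summable fun km : ℕ × ℤ =>
        ‖a (-((km.1 : ℤ) + 1)) km.2 * z₁ ^ (-((km.1 : ℤ) + 1)) * z₂ ^ km.2‖ := by
    intro z₁ z₂ h1 h2 h3 h4
    exact Summable.congr ((hsum z₁ z₂ h1 h2 h3 h4).comp_injective hinj2) fun nm => rfl
  -- swap identities
  have hhd : ∀ z₁ z₂ : ℂ, 1 / r ≤ ‖z₁‖ → ‖z₁‖ ≤ r → 1 / r ≤ ‖z₂‖ → ‖z₂‖ ≤ r →
      (∑' n : ℕ, bfun a (n : ℤ) z₂ * z₁ ^ (n : ℤ)) = ∑' m : ℤ, dfun a m z₁ * z₂ ^ m := by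
    intro z₁ z₂ h1 h2 h3 h4
    have hs2 : Summable (Function.uncurry fun (n : ℕ) (m : ℤ) =>
        a (n : ℤ) m * z₁ ^ (n : ℤ) * z₂ ^ m) := (hNZ z₁ z₂ h1 h2 h3 h4).of_norm
    calc (∑' n : ℕ, bfun a (n : ℤ) z₂ * z₁ ^ (n : ℤ))
        = ∑' (n : ℕ) (m : ℤ), a (n : ℤ) m * z₁ ^ (n : ℤ) * z₂ ^ m := by
          refine tsum_congr fun n => ?_
          unfold bfun
          rw [← tsum_mul_right]
          exact tsum_congr fun m => by ring
      _ = ∑' (m : ℤ) (n : ℕ), a (n : ℤ) m * z₁ ^ (n : ℤ) * z₂ ^ m := (Summable.tsum_comm hs2).symm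
      _ = ∑' m : ℤ, dfun a m z₁ * z₂ ^ m := by
          refine tsum_congr fun m => ?_
          unfold dfun
          rw [← tsum_mul_right]
  have hte : ∀ z₁ z₂ : ℂ, 1 / r ≤ ‖z₁‖ → ‖z₁‖ ≤ r → 1 / r ≤ ‖z₂‖ → ‖z₂‖ ≤ r →
      (∑' k : ℕ, bfun a (-((k : ℤ) + 1)) z₂ * z₁ ^ (-((k : ℤ) + 1)))
        = ∑' m : ℤ, efun a m z₁ * z₂ ^ m := by
    intro z₁ z₂ h1 h2 h3 h4
    have hs2 : Summable (Function.uncurry fun (k : ℕ) (m : ℤ) =>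
        a (-((k : ℤ) + 1)) m * z₁ ^ (-((k : ℤ) + 1)) * z₂ ^ m) :=
      (hNZ' z₁ z₂ h1 h2 h3 h4).of_norm
    calc (∑' k : ℕ, bfun a (-((k : ℤ) + 1)) z₂ * z₁ ^ (-((k : ℤ) + 1)))
        = ∑' (k : ℕ) (m : ℤ), a (-((k : ℤ) + 1)) m * z₁ ^ (-((k : ℤ) + 1)) * z₂ ^ m := by
          refine tsum_congr fun k => ?_
          unfold bfun
          rw [← tsum_mul_right]
          exact tsum_congr fun m => by ring
      _ = ∑' (m : ℤ) (k : ℕ), a (-((k : ℤ) + 1)) m * z₁ ^ (-((k : ℤ) + 1)) * z₂ ^ m :=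
          (Summable.tsum_comm hs2).symm
      _ = ∑' m : ℤ, efun a m z₁ * z₂ ^ m := by
          refine tsum_congr fun m => ?_
          unfold efun
          rw [← tsum_mul_right]
  -- column norms
  have hcolsum : ∀ z₁ : ℂ, 1 / r ≤ ‖z₁‖ → ‖z₁‖ ≤ r → ∀ m : ℤ,
      Summable fun n : ℕ => ‖a (n : ℤ) m * z₁ ^ (n : ℤ)‖ := by
    intro z₁ h1 h2 m
    have h := (hNZ z₁ 1 h1 h2 (by rw [hone]; exact hrm1) (by rw [hone]; exact hr.le)).prod_symm.prod_factor m
    refine h.congr fun n => ?_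
    simp
  have hcolsum' : ∀ z₁ : ℂ, 1 / r ≤ ‖z₁‖ → ‖z₁‖ ≤ r → ∀ m : ℤ,
      Summable fun k : ℕ => ‖a (-((k : ℤ) + 1)) m * z₁ ^ (-((k : ℤ) + 1))‖ := by
    intro z₁ h1 h2 m
    have h := (hNZ' z₁ 1 h1 h2 (by rw [hone]; exact hrm1) (by rw [hone]; exact hr.le)).prod_symm.prod_factor m
    refine h.congr fun n => ?_
    simp
  have hdle : ∀ z₁ : ℂ, 1 / r ≤ ‖z₁‖ → ‖z₁‖ ≤ r → ∀ m : ℤ,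
      ‖dfun a m z₁‖ ≤ ∑' n : ℕ, ‖a (n : ℤ) m * z₁ ^ (n : ℤ)‖ := by
    intro z₁ h1 h2 m
    exact norm_tsum_le_tsum_norm (hcolsum z₁ h1 h2 m)
  have hele : ∀ z₁ : ℂ, 1 / r ≤ ‖z₁‖ → ‖z₁‖ ≤ r → ∀ m : ℤ,
      ‖efun a m z₁‖ ≤ ∑' k : ℕ, ‖a (-((k : ℤ) + 1)) m * z₁ ^ (-((k : ℤ) + 1))‖ := by
    intro z₁ h1 h2 m
    exact norm_tsum_le_tsum_norm (hcolsum' z₁ h1 h2 m)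
  -- marginals over m
  have hdmarg : ∀ z₁ z₂ : ℂ, 1 / r ≤ ‖z₁‖ → ‖z₁‖ ≤ r → 1 / r ≤ ‖z₂‖ → ‖z₂‖ ≤ r →
      Summable fun m : ℤ => (∑' n : ℕ, ‖a (n : ℤ) m * z₁ ^ (n : ℤ)‖) * ‖z₂‖ ^ m := by
    intro z₁ z₂ h1 h2 h3 h4
    have h := ((summable_prod_of_nonneg (fun p => by positivity)).mp
      ((hNZ z₁ z₂ h1 h2 h3 h4).prod_symm)).2
    refine h.congr fun m => ?_
    rw [← tsum_mul_right]
    refine tsum_congr fun n => ?_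
    simp [norm_mul, norm_zpow]
  have hemarg : ∀ z₁ z₂ : ℂ, 1 / r ≤ ‖z₁‖ → ‖z₁‖ ≤ r → 1 / r ≤ ‖z₂‖ → ‖z₂‖ ≤ r →
      Summable fun m : ℤ =>
        (∑' k : ℕ, ‖a (-((k : ℤ) + 1)) m * z₁ ^ (-((k : ℤ) + 1))‖) * ‖z₂‖ ^ m := by
    intro z₁ z₂ h1 h2 h3 h4
    have h := ((summable_prod_of_nonneg (fun p => by positivity)).mp
      ((hNZ' z₁ z₂ h1 h2 h3 h4).prod_symm)).2
    refine h.congr fun m => ?_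
    rw [← tsum_mul_right]
    refine tsum_congr fun k => ?_
    simp [norm_mul, norm_zpow]
  -- summability of d/e rows over ℤ
  have hdsum : ∀ z₁ z₂ : ℂ, 1 / r ≤ ‖z₁‖ → ‖z₁‖ ≤ r → 1 / r ≤ ‖z₂‖ → ‖z₂‖ ≤ r →
      Summable fun m : ℤ => ‖dfun a m z₁ * z₂ ^ m‖ := by
    intro z₁ z₂ h1 h2 h3 h4
    apply Summable.of_nonneg_of_le (fun m => norm_nonneg _) _ (hdmarg z₁ z₂ h1 h2 h3 h4)
    intro m
    rw [norm_mul, norm_zpow]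
    exact mul_le_mul_of_nonneg_right (hdle z₁ h1 h2 m) (by positivity)
  have hesum : ∀ z₁ z₂ : ℂ, 1 / r ≤ ‖z₁‖ → ‖z₁‖ ≤ r → 1 / r ≤ ‖z₂‖ → ‖z₂‖ ≤ r →
      Summable fun m : ℤ => ‖efun a m z₁ * z₂ ^ m‖ := by
    intro z₁ z₂ h1 h2 h3 h4
    apply Summable.of_nonneg_of_le (fun m => norm_nonneg _) _ (hemarg z₁ z₂ h1 h2 h3 h4)
    intro m
    rw [norm_mul, norm_zpow]
    exact mul_le_mul_of_nonneg_right (hele z₁ h1 h2 m) (by positivity)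
  -- Fourier bounds for columns
  have hdF : ∀ z₁ : ℂ, ‖z₁‖ = r → ∀ ρ : ℝ, 1 / r ≤ ρ → ρ ≤ r → ∀ m : ℤ,
      ‖dfun a m z₁‖ * ρ ^ m ≤ M * (r ^ 2 / (r ^ 2 - 1)) := by
    intro z₁ hz1 ρ hρ1 hρ2 m
    have h1 : 1 / r ≤ ‖z₁‖ := by rw [hz1]; exact hrr
    have h2 : ‖z₁‖ ≤ r := le_of_eq hz1
    have hρ0 : 0 < ρ := lt_of_lt_of_le hr1 hρ1
    have hρc : ‖((ρ : ℝ) : ℂ)‖ = ρ := by simp [Complex.norm_real, _root_.abs_of_pos hρ0]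
    refine fourier_coeff_bound (fun m => dfun a m z₁) ρ hρ0 _ ?_ ?_ m
    · have h := hdmarg z₁ ((ρ : ℝ) : ℂ) h1 h2 (by rw [hρc]; exact hρ1) (by rw [hρc]; exact hρ2)
      rw [hρc] at h
      apply Summable.of_nonneg_of_le (fun k => by positivity) _ h
      intro k
      exact mul_le_mul_of_nonneg_right (hdle z₁ h1 h2 k) (by positivity)
    · intro z hz
      have hz3 : 1 / r ≤ ‖z‖ := by rw [hz]; exact hρ1
      have hz4 : ‖z‖ ≤ r := by rw [hz]; exact hρ2
      rw [← hhd z₁ z h1 h2 hz3 hz4]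
      exact hHr z₁ z hz1 hz3 hz4
  have heF : ∀ z₁ : ℂ, ‖z₁‖ = 1 / r → ∀ ρ : ℝ, 1 / r ≤ ρ → ρ ≤ r → ∀ m : ℤ,
      ‖efun a m z₁‖ * ρ ^ m ≤ M * ((2 * r ^ 2 - 1) / (r ^ 2 - 1)) := by
    intro z₁ hz1 ρ hρ1 hρ2 m
    have h1 : 1 / r ≤ ‖z₁‖ := le_of_eq hz1.symm
    have h2 : ‖z₁‖ ≤ r := by rw [hz1]; exact hrr
    have hρ0 : 0 < ρ := lt_of_lt_of_le hr1 hρ1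
    have hρc : ‖((ρ : ℝ) : ℂ)‖ = ρ := by simp [Complex.norm_real, _root_.abs_of_pos hρ0]
    refine fourier_coeff_bound (fun m => efun a m z₁) ρ hρ0 _ ?_ ?_ m
    · have h := hemarg z₁ ((ρ : ℝ) : ℂ) h1 h2 (by rw [hρc]; exact hρ1) (by rw [hρc]; exact hρ2)
      rw [hρc] at h
      apply Summable.of_nonneg_of_le (fun k => by positivity) _ h
      intro k
      exact mul_le_mul_of_nonneg_right (hele z₁ h1 h2 k) (by positivity)
    · intro z hz
      have hz3 : 1 / r ≤ ‖z‖ := by rw [hz]; exact hρ1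
      have hz4 : ‖z‖ ≤ r := by rw [hz]; exact hρ2
      rw [← hte z₁ z h1 h2 hz3 hz4]
      exact hT z₁ z hz1 hz3 hz4
  
  -- final stage
  intro ξ₁ ξ₂ hξ₁ hξ₂
  have hx1a : 1 / r ≤ ‖ξ₁‖ := by rw [hξ₁]; exact hrr
  have hx1b : ‖ξ₁‖ ≤ r := le_of_eq hξ₁
  have hx2a : 1 / r ≤ ‖ξ₂‖ := by rw [hξ₂]; exact hrr
  have hx2b : ‖ξ₂‖ ≤ r := le_of_eq hξ₂
  have hη₁ : ‖ξ₁⁻¹‖ = 1 / r := by rw [norm_inv, hξ₁, one_div]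
  have hη₂ : ‖ξ₂⁻¹‖ = 1 / r := by rw [norm_inv, hξ₂, one_div]
  have hy1a : 1 / r ≤ ‖ξ₁⁻¹‖ := le_of_eq hη₁.symm
  have hy1b : ‖ξ₁⁻¹‖ ≤ r := by rw [hη₁]; exact hrr
  have hy2a : 1 / r ≤ ‖ξ₂⁻¹‖ := le_of_eq hη₂.symm
  have hy2b : ‖ξ₂⁻¹‖ ≤ r := by rw [hη₂]; exact hrr
  have jpos : Function.Injective (fun n : ℕ => (n : ℤ)) := by
    intro x y h
    simp only [] at h
    exact_mod_cast h
  have jneg : Function.Injective (fun n : ℕ => (-((n : ℤ) + 1))) := by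
    intro x y h
    simp only [] at h
    omega
  have hcast : ∀ k : ℕ, (-((k : ℤ) + 1)) = -((k + 1 : ℕ) : ℤ) := by
    intro k; push_cast; ring
  have hnegpow : ∀ (ξ : ℂ) (k : ℕ), (ξ⁻¹) ^ (-((k : ℤ) + 1)) = ξ ^ (k + 1) := by
    intro ξ k
    rw [zpow_neg, inv_zpow, inv_inv]
    norm_cast
  have hM1 : (0:ℝ) ≤ M * (r ^ 2 / (r ^ 2 - 1)) := by positivity
  have hM2 : (0:ℝ) ≤ M * ((2 * r ^ 2 - 1) / (r ^ 2 - 1)) := by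
    have h2r : (0:ℝ) ≤ 2 * r ^ 2 - 1 := by nlinarith
    positivity
  have hC1 : M * (r ^ 2 / (r ^ 2 - 1)) + (M * (r ^ 2 / (r ^ 2 - 1))) * (1 / (r ^ 2 - 1))
      = (r ^ 2 / (r ^ 2 - 1)) ^ 2 * M := by field_simp; ring
  have hC2 : M * (r ^ 2 / (r ^ 2 - 1)) + (M * (r ^ 2 / (r ^ 2 - 1))) * (r ^ 2 / (r ^ 2 - 1))
      = r ^ 2 / (r ^ 2 - 1) * ((2 * r ^ 2 - 1) / (r ^ 2 - 1)) * M := by field_simp; ring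
  have hC3 : M * ((2 * r ^ 2 - 1) / (r ^ 2 - 1))
        + (M * ((2 * r ^ 2 - 1) / (r ^ 2 - 1))) * (1 / (r ^ 2 - 1))
      = r ^ 2 / (r ^ 2 - 1) * ((2 * r ^ 2 - 1) / (r ^ 2 - 1)) * M := by field_simp; ring
  have hC4 : M * ((2 * r ^ 2 - 1) / (r ^ 2 - 1))
        + (M * ((2 * r ^ 2 - 1) / (r ^ 2 - 1))) * (r ^ 2 / (r ^ 2 - 1))
      = ((2 * r ^ 2 - 1) / (r ^ 2 - 1)) ^ 2 * M := by field_simp; ring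
  refine ⟨?_, ?_, ?_, ?_⟩
  · -- g₁
    have A1 : Summable fun nm : ℕ × ℕ =>
        a (nm.1 : ℤ) (nm.2 : ℤ) * ξ₁ ^ (nm.1 : ℤ) * ξ₂ ^ (nm.2 : ℤ) :=
      Summable.congr
        (((hsum ξ₁ ξ₂ hx1a hx1b hx2a hx2b).of_norm).comp_injective (jpos.prodMap jpos))
        fun nm => rfl
    have A1u : Summable (Function.uncurry fun (n : ℕ) (m : ℕ) =>
        a (n : ℤ) (m : ℤ) * ξ₁ ^ (n : ℤ) * ξ₂ ^ (m : ℤ)) := A1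
    have hLHS : (∑' nm : ℕ × ℕ, a (nm.1 : ℤ) (nm.2 : ℤ) * ξ₁ ^ nm.1 * ξ₂ ^ nm.2)
        = ∑' m : ℕ, dfun a (m : ℤ) ξ₁ * ξ₂ ^ ((m : ℕ) : ℤ) := by
      calc (∑' nm : ℕ × ℕ, a (nm.1 : ℤ) (nm.2 : ℤ) * ξ₁ ^ nm.1 * ξ₂ ^ nm.2)
          = ∑' nm : ℕ × ℕ, a (nm.1 : ℤ) (nm.2 : ℤ) * ξ₁ ^ (nm.1 : ℤ) * ξ₂ ^ (nm.2 : ℤ) := by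
            refine tsum_congr fun nm => ?_
            rw [zpow_natCast, zpow_natCast]
        _ = ∑' (n : ℕ) (m : ℕ), a (n : ℤ) (m : ℤ) * ξ₁ ^ (n : ℤ) * ξ₂ ^ (m : ℤ) := Summable.tsum_prod A1
        _ = ∑' (m : ℕ) (n : ℕ), a (n : ℤ) (m : ℤ) * ξ₁ ^ (n : ℤ) * ξ₂ ^ (m : ℤ) :=
            (Summable.tsum_comm A1u).symm
        _ = ∑' m : ℕ, dfun a (m : ℤ) ξ₁ * ξ₂ ^ ((m : ℕ) : ℤ) := by
            refine tsum_congr fun m => ?_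
            unfold dfun
            rw [← tsum_mul_right]
    rw [hLHS]
    have hsZ : Summable fun m : ℤ => dfun a m ξ₁ * ξ₂ ^ m :=
      (hdsum ξ₁ ξ₂ hx1a hx1b hx2a hx2b).of_norm
    have hspl := int_split_tsum _ hsZ
    have heq : (∑' m : ℕ, dfun a (m : ℤ) ξ₁ * ξ₂ ^ ((m : ℕ) : ℤ))
        = (∑' m : ℤ, dfun a m ξ₁ * ξ₂ ^ m)
          - ∑' k : ℕ, dfun a (-((k : ℤ) + 1)) ξ₁ * ξ₂ ^ (-((k : ℤ) + 1)) := by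
      rw [hspl]; ring
    have hZbd : ‖∑' m : ℤ, dfun a m ξ₁ * ξ₂ ^ m‖ ≤ M * (r ^ 2 / (r ^ 2 - 1)) := by
      rw [← hhd ξ₁ ξ₂ hx1a hx1b hx2a hx2b]
      exact hHr ξ₁ ξ₂ hξ₁ hx2a hx2b
    have htail : ‖∑' k : ℕ, dfun a (-((k : ℤ) + 1)) ξ₁ * ξ₂ ^ (-((k : ℤ) + 1))‖
        ≤ (M * (r ^ 2 / (r ^ 2 - 1))) * (1 / (r ^ 2 - 1)) := by
      apply hgeom1 _ hM1
      intro k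
      rw [norm_mul, norm_zpow, hξ₂, hcast k]
      apply term_bound r _ _ hrne (k + 1)
      have hF := hdF ξ₁ hξ₁ (1 / r) le_rfl hrr (-((k + 1 : ℕ) : ℤ))
      rwa [hzpow_inv, neg_neg] at hF
    calc ‖∑' m : ℕ, dfun a (m : ℤ) ξ₁ * ξ₂ ^ ((m : ℕ) : ℤ)‖
        ≤ ‖∑' m : ℤ, dfun a m ξ₁ * ξ₂ ^ m‖
          + ‖∑' k : ℕ, dfun a (-((k : ℤ) + 1)) ξ₁ * ξ₂ ^ (-((k : ℤ) + 1))‖ := by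
          rw [heq]; exact norm_sub_le _ _
      _ ≤ M * (r ^ 2 / (r ^ 2 - 1)) + (M * (r ^ 2 / (r ^ 2 - 1))) * (1 / (r ^ 2 - 1)) :=
          add_le_add hZbd htail
      _ = (r ^ 2 / (r ^ 2 - 1)) ^ 2 * M := hC1
  · -- g₂
    have A2 : Summable fun nm : ℕ × ℕ =>
        a (nm.1 : ℤ) (-((nm.2 : ℤ) + 1)) * ξ₁ ^ (nm.1 : ℤ) * (ξ₂⁻¹) ^ (-((nm.2 : ℤ) + 1)) :=
      Summable.congr
        (((hsum ξ₁ ξ₂⁻¹ hx1a hx1b hy2a hy2b).of_norm).comp_injective (jpos.prodMap jneg))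
        fun nm => rfl
    have A2u : Summable (Function.uncurry fun (n : ℕ) (m : ℕ) =>
        a (n : ℤ) (-((m : ℤ) + 1)) * ξ₁ ^ (n : ℤ) * (ξ₂⁻¹) ^ (-((m : ℤ) + 1))) := A2
    have hLHS : (∑' nm : ℕ × ℕ, a (nm.1 : ℤ) (-((nm.2 : ℤ) + 1)) * ξ₁ ^ nm.1 * ξ₂ ^ (nm.2 + 1))
        = ∑' k : ℕ, dfun a (-((k : ℤ) + 1)) ξ₁ * (ξ₂⁻¹) ^ (-((k : ℤ) + 1)) := by
      calc (∑' nm : ℕ × ℕ, a (nm.1 : ℤ) (-((nm.2 : ℤ) + 1)) * ξ₁ ^ nm.1 * ξ₂ ^ (nm.2 + 1))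
          = ∑' nm : ℕ × ℕ,
              a (nm.1 : ℤ) (-((nm.2 : ℤ) + 1)) * ξ₁ ^ (nm.1 : ℤ) * (ξ₂⁻¹) ^ (-((nm.2 : ℤ) + 1)) := by
            refine tsum_congr fun nm => ?_
            rw [zpow_natCast, hnegpow]
        _ = ∑' (n : ℕ) (m : ℕ),
              a (n : ℤ) (-((m : ℤ) + 1)) * ξ₁ ^ (n : ℤ) * (ξ₂⁻¹) ^ (-((m : ℤ) + 1)) := Summable.tsum_prod A2
        _ = ∑' (m : ℕ) (n : ℕ),
              a (n : ℤ) (-((m : ℤ) + 1)) * ξ₁ ^ (n : ℤ) * (ξ₂⁻¹) ^ (-((m : ℤ) + 1)) :=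
            (Summable.tsum_comm A2u).symm
        _ = ∑' k : ℕ, dfun a (-((k : ℤ) + 1)) ξ₁ * (ξ₂⁻¹) ^ (-((k : ℤ) + 1)) := by
            refine tsum_congr fun m => ?_
            unfold dfun
            rw [← tsum_mul_right]
    rw [hLHS]
    have hsZ : Summable fun m : ℤ => dfun a m ξ₁ * (ξ₂⁻¹) ^ m :=
      (hdsum ξ₁ ξ₂⁻¹ hx1a hx1b hy2a hy2b).of_norm
    have hspl := int_split_tsum _ hsZ
    have heq : (∑' k : ℕ, dfun a (-((k : ℤ) + 1)) ξ₁ * (ξ₂⁻¹) ^ (-((k : ℤ) + 1)))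
        = (∑' m : ℤ, dfun a m ξ₁ * (ξ₂⁻¹) ^ m)
          - ∑' m : ℕ, dfun a (m : ℤ) ξ₁ * (ξ₂⁻¹) ^ ((m : ℕ) : ℤ) := by
      rw [hspl]; ring
    have hZbd : ‖∑' m : ℤ, dfun a m ξ₁ * (ξ₂⁻¹) ^ m‖ ≤ M * (r ^ 2 / (r ^ 2 - 1)) := by
      rw [← hhd ξ₁ ξ₂⁻¹ hx1a hx1b hy2a hy2b]
      exact hHr ξ₁ ξ₂⁻¹ hξ₁ hy2a hy2b
    have hnat : ‖∑' m : ℕ, dfun a (m : ℤ) ξ₁ * (ξ₂⁻¹) ^ ((m : ℕ) : ℤ)‖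
        ≤ (M * (r ^ 2 / (r ^ 2 - 1))) * (r ^ 2 / (r ^ 2 - 1)) := by
      apply hgeom0
      intro n
      rw [norm_mul, norm_zpow, hη₂, hzpow_inv]
      apply term_bound r _ _ hrne n
      exact hdF ξ₁ hξ₁ r hrr le_rfl (n : ℤ)
    calc ‖∑' k : ℕ, dfun a (-((k : ℤ) + 1)) ξ₁ * (ξ₂⁻¹) ^ (-((k : ℤ) + 1))‖
        ≤ ‖∑' m : ℤ, dfun a m ξ₁ * (ξ₂⁻¹) ^ m‖
          + ‖∑' m : ℕ, dfun a (m : ℤ) ξ₁ * (ξ₂⁻¹) ^ ((m : ℕ) : ℤ)‖ := by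
          rw [heq]; exact norm_sub_le _ _
      _ ≤ M * (r ^ 2 / (r ^ 2 - 1)) + (M * (r ^ 2 / (r ^ 2 - 1))) * (r ^ 2 / (r ^ 2 - 1)) :=
          add_le_add hZbd hnat
      _ = r ^ 2 / (r ^ 2 - 1) * ((2 * r ^ 2 - 1) / (r ^ 2 - 1)) * M := hC2
  · -- g₃
    have A3 : Summable fun nm : ℕ × ℕ =>
        a (-((nm.1 : ℤ) + 1)) (nm.2 : ℤ) * (ξ₁⁻¹) ^ (-((nm.1 : ℤ) + 1)) * ξ₂ ^ (nm.2 : ℤ) :=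
      Summable.congr
        (((hsum ξ₁⁻¹ ξ₂ hy1a hy1b hx2a hx2b).of_norm).comp_injective (jneg.prodMap jpos))
        fun nm => rfl
    have A3u : Summable (Function.uncurry fun (n : ℕ) (m : ℕ) =>
        a (-((n : ℤ) + 1)) (m : ℤ) * (ξ₁⁻¹) ^ (-((n : ℤ) + 1)) * ξ₂ ^ (m : ℤ)) := A3
    have hLHS : (∑' nm : ℕ × ℕ, a (-((nm.1 : ℤ) + 1)) (nm.2 : ℤ) * ξ₁ ^ (nm.1 + 1) * ξ₂ ^ nm.2)
        = ∑' m : ℕ, efun a (m : ℤ) ξ₁⁻¹ * ξ₂ ^ ((m : ℕ) : ℤ) := by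
      calc (∑' nm : ℕ × ℕ, a (-((nm.1 : ℤ) + 1)) (nm.2 : ℤ) * ξ₁ ^ (nm.1 + 1) * ξ₂ ^ nm.2)
          = ∑' nm : ℕ × ℕ,
              a (-((nm.1 : ℤ) + 1)) (nm.2 : ℤ) * (ξ₁⁻¹) ^ (-((nm.1 : ℤ) + 1)) * ξ₂ ^ (nm.2 : ℤ) := by
            refine tsum_congr fun nm => ?_
            rw [zpow_natCast, hnegpow]
        _ = ∑' (n : ℕ) (m : ℕ),
              a (-((n : ℤ) + 1)) (m : ℤ) * (ξ₁⁻¹) ^ (-((n : ℤ) + 1)) * ξ₂ ^ (m : ℤ) := Summable.tsum_prod A3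
        _ = ∑' (m : ℕ) (n : ℕ),
              a (-((n : ℤ) + 1)) (m : ℤ) * (ξ₁⁻¹) ^ (-((n : ℤ) + 1)) * ξ₂ ^ (m : ℤ) :=
            (Summable.tsum_comm A3u).symm
        _ = ∑' m : ℕ, efun a (m : ℤ) ξ₁⁻¹ * ξ₂ ^ ((m : ℕ) : ℤ) := by
            refine tsum_congr fun m => ?_
            unfold efun
            rw [← tsum_mul_right]
    rw [hLHS]
    have hsZ : Summable fun m : ℤ => efun a m ξ₁⁻¹ * ξ₂ ^ m :=
      (hesum ξ₁⁻¹ ξ₂ hy1a hy1b hx2a hx2b).of_norm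
    have hspl := int_split_tsum _ hsZ
    have heq : (∑' m : ℕ, efun a (m : ℤ) ξ₁⁻¹ * ξ₂ ^ ((m : ℕ) : ℤ))
        = (∑' m : ℤ, efun a m ξ₁⁻¹ * ξ₂ ^ m)
          - ∑' k : ℕ, efun a (-((k : ℤ) + 1)) ξ₁⁻¹ * ξ₂ ^ (-((k : ℤ) + 1)) := by
      rw [hspl]; ring
    have hZbd : ‖∑' m : ℤ, efun a m ξ₁⁻¹ * ξ₂ ^ m‖ ≤ M * ((2 * r ^ 2 - 1) / (r ^ 2 - 1)) := by
      rw [← hte ξ₁⁻¹ ξ₂ hy1a hy1b hx2a hx2b]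
      exact hT ξ₁⁻¹ ξ₂ hη₁ hx2a hx2b
    have htail : ‖∑' k : ℕ, efun a (-((k : ℤ) + 1)) ξ₁⁻¹ * ξ₂ ^ (-((k : ℤ) + 1))‖
        ≤ (M * ((2 * r ^ 2 - 1) / (r ^ 2 - 1))) * (1 / (r ^ 2 - 1)) := by
      apply hgeom1 _ hM2
      intro k
      rw [norm_mul, norm_zpow, hξ₂, hcast k]
      apply term_bound r _ _ hrne (k + 1)
      have hF := heF ξ₁⁻¹ hη₁ (1 / r) le_rfl hrr (-((k + 1 : ℕ) : ℤ))
      rwa [hzpow_inv, neg_neg] at hF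
    calc ‖∑' m : ℕ, efun a (m : ℤ) ξ₁⁻¹ * ξ₂ ^ ((m : ℕ) : ℤ)‖
        ≤ ‖∑' m : ℤ, efun a m ξ₁⁻¹ * ξ₂ ^ m‖
          + ‖∑' k : ℕ, efun a (-((k : ℤ) + 1)) ξ₁⁻¹ * ξ₂ ^ (-((k : ℤ) + 1))‖ := by
          rw [heq]; exact norm_sub_le _ _
      _ ≤ M * ((2 * r ^ 2 - 1) / (r ^ 2 - 1))
          + (M * ((2 * r ^ 2 - 1) / (r ^ 2 - 1))) * (1 / (r ^ 2 - 1)) := add_le_add hZbd htail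
      _ = r ^ 2 / (r ^ 2 - 1) * ((2 * r ^ 2 - 1) / (r ^ 2 - 1)) * M := hC3
  · -- g₄
    have A4 : Summable fun nm : ℕ × ℕ =>
        a (-((nm.1 : ℤ) + 1)) (-((nm.2 : ℤ) + 1)) * (ξ₁⁻¹) ^ (-((nm.1 : ℤ) + 1))
          * (ξ₂⁻¹) ^ (-((nm.2 : ℤ) + 1)) :=
      Summable.congr
        (((hsum ξ₁⁻¹ ξ₂⁻¹ hy1a hy1b hy2a hy2b).of_norm).comp_injective (jneg.prodMap jneg))
        fun nm => rfl
    have A4u : Summable (Function.uncurry fun (n : ℕ) (m : ℕ) =>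
        a (-((n : ℤ) + 1)) (-((m : ℤ) + 1)) * (ξ₁⁻¹) ^ (-((n : ℤ) + 1)) * (ξ₂⁻¹) ^ (-((m : ℤ) + 1))) := A4
    have hLHS : (∑' nm : ℕ × ℕ,
          a (-((nm.1 : ℤ) + 1)) (-((nm.2 : ℤ) + 1)) * ξ₁ ^ (nm.1 + 1) * ξ₂ ^ (nm.2 + 1))
        = ∑' k : ℕ, efun a (-((k : ℤ) + 1)) ξ₁⁻¹ * (ξ₂⁻¹) ^ (-((k : ℤ) + 1)) := by
      calc (∑' nm : ℕ × ℕ,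
            a (-((nm.1 : ℤ) + 1)) (-((nm.2 : ℤ) + 1)) * ξ₁ ^ (nm.1 + 1) * ξ₂ ^ (nm.2 + 1))
          = ∑' nm : ℕ × ℕ, a (-((nm.1 : ℤ) + 1)) (-((nm.2 : ℤ) + 1))
              * (ξ₁⁻¹) ^ (-((nm.1 : ℤ) + 1)) * (ξ₂⁻¹) ^ (-((nm.2 : ℤ) + 1)) := by
            refine tsum_congr fun nm => ?_
            rw [hnegpow, hnegpow]
        _ = ∑' (n : ℕ) (m : ℕ), a (-((n : ℤ) + 1)) (-((m : ℤ) + 1))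
              * (ξ₁⁻¹) ^ (-((n : ℤ) + 1)) * (ξ₂⁻¹) ^ (-((m : ℤ) + 1)) := Summable.tsum_prod A4
        _ = ∑' (m : ℕ) (n : ℕ), a (-((n : ℤ) + 1)) (-((m : ℤ) + 1))
              * (ξ₁⁻¹) ^ (-((n : ℤ) + 1)) * (ξ₂⁻¹) ^ (-((m : ℤ) + 1)) := (Summable.tsum_comm A4u).symm
        _ = ∑' k : ℕ, efun a (-((k : ℤ) + 1)) ξ₁⁻¹ * (ξ₂⁻¹) ^ (-((k : ℤ) + 1)) := by
            refine tsum_congr fun m => ?_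
            unfold efun
            rw [← tsum_mul_right]
    rw [hLHS]
    have hsZ : Summable fun m : ℤ => efun a m ξ₁⁻¹ * (ξ₂⁻¹) ^ m :=
      (hesum ξ₁⁻¹ ξ₂⁻¹ hy1a hy1b hy2a hy2b).of_norm
    have hspl := int_split_tsum _ hsZ
    have heq : (∑' k : ℕ, efun a (-((k : ℤ) + 1)) ξ₁⁻¹ * (ξ₂⁻¹) ^ (-((k : ℤ) + 1)))
        = (∑' m : ℤ, efun a m ξ₁⁻¹ * (ξ₂⁻¹) ^ m)
          - ∑' m : ℕ, efun a (m : ℤ) ξ₁⁻¹ * (ξ₂⁻¹) ^ ((m : ℕ) : ℤ) := by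
      rw [hspl]; ring
    have hZbd : ‖∑' m : ℤ, efun a m ξ₁⁻¹ * (ξ₂⁻¹) ^ m‖
        ≤ M * ((2 * r ^ 2 - 1) / (r ^ 2 - 1)) := by
      rw [← hte ξ₁⁻¹ ξ₂⁻¹ hy1a hy1b hy2a hy2b]
      exact hT ξ₁⁻¹ ξ₂⁻¹ hη₁ hy2a hy2b
    have hnat : ‖∑' m : ℕ, efun a (m : ℤ) ξ₁⁻¹ * (ξ₂⁻¹) ^ ((m : ℕ) : ℤ)‖
        ≤ (M * ((2 * r ^ 2 - 1) / (r ^ 2 - 1))) * (r ^ 2 / (r ^ 2 - 1)) := by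
      apply hgeom0
      intro n
      rw [norm_mul, norm_zpow, hη₂, hzpow_inv]
      apply term_bound r _ _ hrne n
      exact heF ξ₁⁻¹ hη₁ r hrr le_rfl (n : ℤ)
    calc ‖∑' k : ℕ, efun a (-((k : ℤ) + 1)) ξ₁⁻¹ * (ξ₂⁻¹) ^ (-((k : ℤ) + 1))‖
        ≤ ‖∑' m : ℤ, efun a m ξ₁⁻¹ * (ξ₂⁻¹) ^ m‖
          + ‖∑' m : ℕ, efun a (m : ℤ) ξ₁⁻¹ * (ξ₂⁻¹) ^ ((m : ℕ) : ℤ)‖ := by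
          rw [heq]; exact norm_sub_le _ _
      _ ≤ M * ((2 * r ^ 2 - 1) / (r ^ 2 - 1))
          + (M * ((2 * r ^ 2 - 1) / (r ^ 2 - 1))) * (r ^ 2 / (r ^ 2 - 1)) :=
          add_le_add hZbd hnat
      _ = ((2 * r ^ 2 - 1) / (r ^ 2 - 1)) ^ 2 * M := hC4
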